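/- Let E be a finite set with at least two elements, let X ⊆ ℝⁿ be compact and equal to the closure of its interior, and for each e ∈ E let φ_e(x) = a_e + r_e·x with a_e ∈ ℝⁿ and r_e ∈ (0,1) (rotation-free contracting similarities) satisfy φ_e(X) ⊆ X and the Open Set Condition: φ_a(interior X) ∩ φ_b(interior X) = ∅ for a ≠ b. Let J = { lim_{m→∞} φ_{ω₁}∘⋯∘φ_{ω_m}(x₀) : ω ∈ E^ℕ } (x₀ ∈ X arbitrary; the limit exists and does not depend on x₀). Suppose there is a set V ⊆ S^{n-1} such that for every x ∈ ⋃_{e∈E} φ_e(X) and every unit vector v ∈ S^{n-1} ∖ V one has ( interior(X) ∩ (x + ℝ·v) ) ∖ ⋃_{e∈E} φ_e(X) ≠ ∅. Then for every v ∈ S^{n-1} ∖ V the limit set J is v-directed porous. -/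

import Mathlib

open Metric Set Filter

/-- `por A x r` is the porosity of the set `A` at the point `x` at scale `r`:
the supremum of all `c ≥ 0` such that some open ball of radius `c·r` is contained
in `B(x,r) ∖ A`. -/
noncomputable def por {X : Type*} [MetricSpace X] (A : Set X) (x : X) (r : ℝ) : ℝ :=
  sSup {c : ℝ | 0 ≤ c ∧ ∃ y : X, Metric.ball y (c * r) ⊆ Metric.ball x r \ A}

/-- `A` is porous at the point `x`. -/
def PorousAt {X : Type*} [MetricSpace X] (A : Set X) (x : X) : Prop :=
  ∃ c ∈ Set.Ioo (0 : ℝ) 1, ∃ r₀ > (0 : ℝ), ∀ r ∈ Set.Ioo (0 : ℝ) r₀, c ≤ por A x r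

/-- `A` is porous. -/
def Porous {X : Type*} [MetricSpace X] (A : Set X) : Prop :=
  ∃ c ∈ Set.Ioo (0 : ℝ) 1, ∃ r₀ > (0 : ℝ), ∀ x ∈ A, ∀ r ∈ Set.Ioo (0 : ℝ) r₀, c ≤ por A x r

/-- Directed porosity of `A` at `x` at scale `r` in direction `v`: the supremum of all
`c ≥ 0` such that some open ball of radius `c·r` centered on the line `x + ℝ·v` is
contained in `B(x,r) ∖ A`. -/
noncomputable def porDir {V : Type*} [NormedAddCommGroup V] [NormedSpace ℝ V]
    (v : V) (A : Set V) (x : V) (r : ℝ) : ℝ :=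
  sSup {c : ℝ | 0 ≤ c ∧ ∃ t : ℝ,
    Metric.ball (x + t • v) (c * r) ⊆ Metric.ball x r \ A}

/-- `A` is `v`-directed porous. -/
def DirectedPorous {V : Type*} [NormedAddCommGroup V] [NormedSpace ℝ V]
    (v : V) (A : Set V) : Prop :=
  ∃ c ∈ Set.Ioo (0 : ℝ) 1, ∃ r₀ > (0 : ℝ), ∀ x ∈ A, ∀ r ∈ Set.Ioo (0 : ℝ) r₀,
    c ≤ porDir v A x r



section Aux
variable {n : ℕ} {E : Type*}

def comp7 (φ : E → EuclideanSpace ℝ (Fin n) → EuclideanSpace ℝ (Fin n))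
    (l : List E) : EuclideanSpace ℝ (Fin n) → EuclideanSpace ℝ (Fin n) :=
  l.foldr (fun e g => φ e ∘ g) id

variable {X : Set (EuclideanSpace ℝ (Fin n))} {a : E → EuclideanSpace ℝ (Fin n)} {r : E → ℝ}
  {φ : E → EuclideanSpace ℝ (Fin n) → EuclideanSpace ℝ (Fin n)}

lemma comp7_nil : comp7 φ [] = id := rfl
lemma comp7_cons (e : E) (l : List E) : comp7 φ (e :: l) = φ e ∘ comp7 φ l := rfl
lemma comp7_single (e : E) : comp7 φ [e] = φ e := rfl

lemma comp7_append (l₁ l₂ : List E) : comp7 φ (l₁ ++ l₂) = comp7 φ l₁ ∘ comp7 φ l₂ := by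
  induction l₁ with
  | nil => rfl
  | cons e l ih => rw [List.cons_append, comp7_cons, comp7_cons, ih]; rfl

lemma dist_comp7 (hφ : ∀ e x, φ e x = a e + r e • x) (hr : ∀ e, 0 < r e) (l : List E)
    (x y : EuclideanSpace ℝ (Fin n)) :
    dist (comp7 φ l x) (comp7 φ l y) = (l.map r).prod * dist x y := by
  induction l with
  | nil => simp [comp7]
  | cons e l ih =>
    simp only [comp7_cons, Function.comp_apply, List.map_cons, List.prod_cons, hφ]
    rw [dist_add_left, dist_smul₀, ih, Real.norm_eq_abs, abs_of_pos (hr e), mul_assoc]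

lemma comp7_affine (hφ : ∀ e x, φ e x = a e + r e • x) (l : List E)
    (x : EuclideanSpace ℝ (Fin n)) :
    comp7 φ l x = comp7 φ l 0 + (l.map r).prod • x := by
  induction l with
  | nil => simp [comp7]
  | cons e l ih =>
    simp only [comp7_cons, Function.comp_apply, List.map_cons, List.prod_cons, hφ, ih]
    rw [mul_smul, add_assoc, smul_add]

lemma comp7_line (hφ : ∀ e x, φ e x = a e + r e • x) (l : List E)
    (x v : EuclideanSpace ℝ (Fin n)) (t : ℝ) :
    comp7 φ l (x + t • v) = comp7 φ l x + ((l.map r).prod * t) • v := by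
  rw [comp7_affine hφ, comp7_affine hφ l x, smul_add, ← add_assoc, mul_smul]

lemma comp7_surj (hφ : ∀ e x, φ e x = a e + r e • x) (hr : ∀ e, 0 < r e) (l : List E) :
    Function.Surjective (comp7 φ l) := by
  induction l with
  | nil => exact Function.surjective_id
  | cons e l ih =>
    rw [comp7_cons]
    refine Function.Surjective.comp ?_ ih
    intro w
    refine ⟨(r e)⁻¹ • (w - a e), ?_⟩
    rw [hφ, smul_inv_smul₀ (hr e).ne', add_sub_cancel]

lemma comp7_prod_pos (hr : ∀ e, 0 < r e) (l : List E) : 0 < (l.map r).prod :=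
  List.prod_pos (by intro x hx; obtain ⟨e, -, rfl⟩ := List.mem_map.1 hx; exact hr e)

lemma comp7_inj (hφ : ∀ e x, φ e x = a e + r e • x) (hr : ∀ e, 0 < r e) (l : List E) :
    Function.Injective (comp7 φ l) := by
  intro x y h
  have := dist_comp7 hφ hr l x y
  rw [h, dist_self] at this
  have h2 := (comp7_prod_pos hr l (r := r))
  have : dist x y = 0 := by
    rcases mul_eq_zero.1 this.symm with h' | h'
    · exact absurd h' h2.ne'
    · exact h'
  exact dist_eq_zero.1 this

lemma comp7_cont (hφ : ∀ e x, φ e x = a e + r e • x) (l : List E) :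
    Continuous (comp7 φ l) := by
  induction l with
  | nil => exact continuous_id
  | cons e l ih =>
    rw [comp7_cons]
    refine Continuous.comp ?_ ih
    have : φ e = fun x => a e + r e • x := funext (hφ e)
    rw [this]
    exact continuous_const.add (continuous_const_smul (r e))

lemma comp7_maps (hmaps : ∀ e, φ e '' X ⊆ X) (l : List E) : comp7 φ l '' X ⊆ X := by
  induction l with
  | nil => simp [comp7]
  | cons e l ih =>
    rw [comp7_cons, Set.image_comp]
    exact (Set.image_mono ih).trans (hmaps e)

lemma comp7_isOpenMap (hφ : ∀ e x, φ e x = a e + r e • x) (hr : ∀ e, 0 < r e) (l : List E) :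
    IsOpenMap (comp7 φ l) := by
  have : comp7 φ l = (fun y => comp7 φ l 0 + y) ∘ (fun x => (l.map r).prod • x) := by
    funext x; exact comp7_affine hφ l x
  rw [this]
  exact (isOpenMap_add_left _).comp (isOpenMap_smul₀ (comp7_prod_pos hr l (r := r)).ne')

lemma comp7_ball (hφ : ∀ e x, φ e x = a e + r e • x) (hr : ∀ e, 0 < r e) (l : List E)
    (y : EuclideanSpace ℝ (Fin n)) (ρ : ℝ) :
    Metric.ball (comp7 φ l y) ((l.map r).prod * ρ) ⊆ comp7 φ l '' Metric.ball y ρ := by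
  intro w hw
  obtain ⟨u, rfl⟩ := comp7_surj hφ hr l w
  refine ⟨u, ?_, rfl⟩
  rw [Metric.mem_ball] at hw ⊢
  rw [dist_comp7 hφ hr] at hw
  exact lt_of_mul_lt_mul_left hw (comp7_prod_pos hr l (r := r)).le


lemma comp7_interior (hφ : ∀ e x, φ e x = a e + r e • x) (hr : ∀ e, 0 < r e)
    (hmaps : ∀ e, φ e '' X ⊆ X) (l : List E) :
    comp7 φ l '' interior X ⊆ interior X :=
  interior_maximal ((Set.image_mono interior_subset).trans (comp7_maps hmaps l))
    (comp7_isOpenMap hφ hr l _ isOpen_interior)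

lemma comp7_osc (hφ : ∀ e x, φ e x = a e + r e • x) (hr : ∀ e, 0 < r e)
    (hmaps : ∀ e, φ e '' X ⊆ X)
    (hOSC : ∀ e₁ e₂ : E, e₁ ≠ e₂ → Disjoint (φ e₁ '' interior X) (φ e₂ '' interior X)) :
    ∀ l₁ l₂ : List E, l₁.length = l₂.length → l₁ ≠ l₂ →
      Disjoint (comp7 φ l₁ '' interior X) (comp7 φ l₂ '' interior X) := by
  intro l₁
  induction l₁ with
  | nil =>
    intro l₂ h hne
    cases l₂ with
    | nil => exact absurd rfl hne
    | cons e l => simp at h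
  | cons e₁ l₁ ih =>
    intro l₂ h hne
    cases l₂ with
    | nil => simp at h
    | cons e₂ l₂ =>
      by_cases he : e₁ = e₂
      · subst he
        have hl : l₁ ≠ l₂ := by rintro rfl; exact hne rfl
        have hd := ih l₂ (by simpa using h) hl
        simp only [comp7_cons, Set.image_comp]
        exact Set.disjoint_image_of_injective
          (fun x y hxy => by
            have : dist (φ e₁ x) (φ e₁ y) = r e₁ * dist x y := by
              rw [hφ, hφ, dist_add_left, dist_smul₀, Real.norm_eq_abs, abs_of_pos (hr e₁)]
            rw [hxy, dist_self] at this
            have := (mul_eq_zero.1 this.symm).resolve_left (hr e₁).ne'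
            exact dist_eq_zero.1 this) hd
      · refine (hOSC e₁ e₂ he).mono ?_ ?_
        · rw [comp7_cons, Set.image_comp]
          exact Set.image_mono (comp7_interior hφ hr hmaps l₁)
        · rw [comp7_cons, Set.image_comp]
          exact Set.image_mono (comp7_interior hφ hr hmaps l₂)

end Aux

lemma ofFn_snoc7 {E : Type*} (σ : ℕ → E) (m : ℕ) :
    (List.ofFn fun i : Fin (m+1) => σ i) = (List.ofFn fun i : Fin m => σ i) ++ [σ m] := by
  have h := List.ofFn_add (f := fun i : Fin (m + 1) => σ i) (n := m) (m := 1)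
  simpa using h

theorem stmt7 {n : ℕ} {E : Type*} [Finite E] [Nontrivial E]
    (X : Set (EuclideanSpace ℝ (Fin n)))
    (hXc : IsCompact X) (hXreg : X = closure (interior X))
    (a : E → EuclideanSpace ℝ (Fin n)) (r : E → ℝ)
    (hr : ∀ e, r e ∈ Set.Ioo (0 : ℝ) 1)
    (φ : E → EuclideanSpace ℝ (Fin n) → EuclideanSpace ℝ (Fin n))
    (hφ : ∀ e x, φ e x = a e + r e • x)
    (hmaps : ∀ e, φ e '' X ⊆ X)
    (hOSC : ∀ e₁ e₂ : E, e₁ ≠ e₂ → Disjoint (φ e₁ '' interior X) (φ e₂ '' interior X))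
    (x₀ : EuclideanSpace ℝ (Fin n)) (hx₀ : x₀ ∈ X)
    (J : Set (EuclideanSpace ℝ (Fin n)))
    (hJ : J = {x | ∃ ω : ℕ → E, Filter.Tendsto
      (fun m => (List.ofFn fun i : Fin m => ω i).foldr (fun e g => φ e ∘ g) id x₀)
      Filter.atTop (nhds x)})
    (V : Set (EuclideanSpace ℝ (Fin n)))
    (hV : ∀ x ∈ ⋃ e : E, φ e '' X, ∀ v : EuclideanSpace ℝ (Fin n), ‖v‖ = 1 → v ∉ V →
      ((interior X ∩ {y | ∃ t : ℝ, y = x + t • v}) \ ⋃ e : E, φ e '' X).Nonempty) :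
    ∀ v : EuclideanSpace ℝ (Fin n), ‖v‖ = 1 → v ∉ V → DirectedPorous v J := by
  intro v hv hvV
  have hrpos : ∀ e, 0 < r e := fun e => (hr e).1
  have hφcont : ∀ e, Continuous (φ e) := fun e => by
    have h : φ e = fun x => a e + r e • x := funext (hφ e)
    rw [h]; exact continuous_const.add (continuous_const_smul (r e))
  have hKc : IsCompact (⋃ e : E, φ e '' X) := isCompact_iUnion fun e => hXc.image (hφcont e)
  set K := ⋃ e : E, φ e '' X with hKdef
  set O := interior X \ K with hOdef
  have hOopen : IsOpen O := isOpen_interior.sdiff hKc.isClosed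
  -- choice of porosity holes above each point of K
  have hchoice : ∀ z ∈ K, ∃ t : ℝ, ∃ ε : ℝ, 0 < ε ∧ Metric.ball (z + t • v) (2 * ε) ⊆ O := by
    intro z hz
    obtain ⟨y, ⟨⟨hyi, t, hyt⟩, hyK⟩⟩ := hV z hz v hv hvV
    have hyO : y ∈ O := ⟨hyi, hyK⟩
    obtain ⟨ε, hε, hballe⟩ := Metric.isOpen_iff.1 hOopen y hyO
    refine ⟨t, ε / 2, by linarith, ?_⟩
    rw [← hyt]
    have h2 : 2 * (ε / 2) = ε := by ring
    rw [h2]; exact hballe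
  choose! t ε hεpos hballO using hchoice
  have hKne : K.Nonempty := by
    obtain ⟨e⟩ := (inferInstance : Nonempty E)
    exact ⟨φ e x₀, by rw [hKdef]; exact Set.mem_iUnion.2 ⟨e, ⟨x₀, hx₀, rfl⟩⟩⟩
  obtain ⟨fs, hfs⟩ := hKc.elim_finite_subcover
    (fun z : K => Metric.ball (z : EuclideanSpace ℝ (Fin n)) (ε z))
    (fun z => Metric.isOpen_ball)
    (fun z hz => Set.mem_iUnion.2 ⟨⟨z, hz⟩, Metric.mem_ball_self (hεpos z hz)⟩)
  have hfsne : fs.Nonempty := by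
    obtain ⟨z₀, hz₀⟩ := hKne
    obtain ⟨i, hi, -⟩ := Set.mem_iUnion₂.1 (hfs hz₀)
    exact ⟨i, hi⟩
  set ρ₀ := fs.inf' hfsne (fun i => ε i) with hρ₀def
  set T := fs.sup' hfsne (fun i => |t i|) with hTdef
  have hρ₀pos : 0 < ρ₀ := by
    rw [hρ₀def]
    exact (Finset.lt_inf'_iff hfsne).2 fun i _ => hεpos i i.2
  have hTnn : 0 ≤ T := by
    obtain ⟨i, hi⟩ := id hfsne
    rw [hTdef]
    exact (abs_nonneg (t ↑i)).trans (Finset.le_sup' (fun j : ↥K => |t ↑j|) hi)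
  have huni : ∀ z ∈ K, ∃ tz : ℝ, |tz| ≤ T ∧ Metric.ball (z + tz • v) ρ₀ ⊆ O := by
    intro z hz
    obtain ⟨i, hi, hzi⟩ := Set.mem_iUnion₂.1 (hfs hz)
    refine ⟨t i, by rw [hTdef]; exact Finset.le_sup' (fun j : ↥K => |t ↑j|) hi, fun w hw => hballO i i.2 ?_⟩
    rw [Metric.mem_ball] at hw ⊢
    have h2 : dist (z + t ↑i • v) ((i : EuclideanSpace ℝ (Fin n)) + t ↑i • v) = dist z ↑i :=
      dist_add_right _ _ _
    have h3 : dist z ↑i < ε ↑i := Metric.mem_ball.1 hzi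
    have h4 : ρ₀ ≤ ε ↑i := by rw [hρ₀def]; exact Finset.inf'_le _ hi
    have h5 := dist_triangle w (z + t ↑i • v) ((i : EuclideanSpace ℝ (Fin n)) + t ↑i • v)
    rw [h2] at h5
    linarith
  -- ratio bounds
  cases nonempty_fintype E
  have hEne : (Finset.univ : Finset E).Nonempty := Finset.univ_nonempty
  set rmin := Finset.univ.inf' hEne r with hrmindef
  set rmax := Finset.univ.sup' hEne r with hrmaxdef
  have hrminpos : 0 < rmin := by
    rw [hrmindef]; exact (Finset.lt_inf'_iff hEne).2 fun e _ => hrpos e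
  have hrminle : ∀ e, rmin ≤ r e := by
    intro e; rw [hrmindef]; exact Finset.inf'_le _ (Finset.mem_univ e)
  have hrmaxlt : rmax < 1 := by
    obtain ⟨e, -, he⟩ := Finset.exists_mem_eq_sup' hEne r
    rw [hrmaxdef, he]; exact (hr e).2
  have hrle : ∀ e, r e ≤ rmax := by
    intro e; rw [hrmaxdef]; exact Finset.le_sup' r (Finset.mem_univ e)
  have hrmaxnn : 0 ≤ rmax := by
    obtain ⟨e, -⟩ := id hEne
    exact (hrpos e).le.trans (hrle e)
  set β := T + ρ₀ + 1 with hβdef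
  have hβ1 : 1 ≤ β := by rw [hβdef]; linarith
  have hβpos : 0 < β := lt_of_lt_of_le one_pos hβ1
  set c := min (ρ₀ * rmin / β) (1/2) with hcdef
  have hcpos : 0 < c := lt_min (div_pos (mul_pos hρ₀pos hrminpos) hβpos) one_half_pos
  -- J membership in cylinders
  have hmemJ : ∀ (σ : ℕ → E) (p : EuclideanSpace ℝ (Fin n)),
      Tendsto (fun m => comp7 φ (List.ofFn fun i : Fin m => σ i) x₀) atTop (nhds p) →
      ∀ m, p ∈ comp7 φ (List.ofFn fun i : Fin m => σ i) '' X := by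
    intro σ p hten m
    have hcl : IsClosed (comp7 φ (List.ofFn fun i : Fin m => σ i) '' X) :=
      (hXc.image (comp7_cont hφ _)).isClosed
    refine hcl.mem_of_tendsto hten (Filter.eventually_atTop.2 ⟨m, fun k hk => ?_⟩)
    obtain ⟨j, rfl⟩ := Nat.exists_eq_add_of_le hk
    have hsplit : (List.ofFn fun i : Fin (m + j) => σ i) =
        (List.ofFn fun i : Fin m => σ i) ++ (List.ofFn fun i : Fin j => σ (m + i)) := by
      have h := List.ofFn_add (f := fun i : Fin (m + j) => σ i) (n := m) (m := j)
      simpa using h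
    refine ⟨comp7 φ (List.ofFn fun i : Fin j => σ (m + i)) x₀,
      comp7_maps hmaps _ ⟨x₀, hx₀, rfl⟩, ?_⟩
    rw [hsplit, comp7_append]
    rfl
  refine ⟨c, ⟨hcpos, lt_of_le_of_lt (min_le_right _ _) one_half_lt_one⟩, 1, one_pos, ?_⟩
  intro x hx s hs
  have hx' := hx
  rw [hJ] at hx'
  obtain ⟨ω, hten⟩ := hx'
  set L : ℕ → List E := fun m => List.ofFn fun i : Fin m => ω i with hLdef
  set R : ℕ → ℝ := fun m => ((L m).map r).prod with hRdef
  have hRpos : ∀ m, 0 < R m := fun m => comp7_prod_pos hrpos _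
  have hLsucc : ∀ m, L (m + 1) = L m ++ [ω m] := by
    intro m
    rw [hLdef]
    exact ofFn_snoc7 ω m
  have hRsucc : ∀ m, R m * r (ω m) = R (m + 1) := by
    intro m
    rw [hRdef]
    simp only
    rw [hLsucc m, List.map_append, List.prod_append]
    simp
  have hR0 : R 0 = 1 := by simp [hRdef, hLdef]
  have hRle : ∀ m, R m ≤ rmax ^ m := by
    intro m
    induction m with
    | zero => rw [hR0]; simp
    | succ m ih =>
      rw [← hRsucc, pow_succ]
      exact mul_le_mul ih (hrle _) (hrpos _).le (by positivity)
  have hex : ∃ m, R m * β < s := by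
    have h0 : Tendsto (fun m => rmax ^ m) atTop (nhds 0) :=
      tendsto_pow_atTop_nhds_zero_of_lt_one hrmaxnn hrmaxlt
    have hsβ : 0 < s / β := div_pos hs.1 hβpos
    obtain ⟨m, hm⟩ := (h0.eventually (gt_mem_nhds hsβ)).exists
    refine ⟨m, ?_⟩
    calc R m * β ≤ rmax ^ m * β := mul_le_mul_of_nonneg_right (hRle m) hβpos.le
    _ < s := (lt_div_iff₀ hβpos).1 hm
  set m := Nat.find hex with hmdef
  have hmlt : R m * β < s := Nat.find_spec hex
  have hm0 : m ≠ 0 := by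
    intro h
    rw [h, hR0, one_mul] at hmlt
    have : s < 1 := hs.2
    linarith
  obtain ⟨m', hm'⟩ := Nat.exists_eq_succ_of_ne_zero hm0
  have hRm'β : s ≤ R m' * β := not_lt.1 (Nat.find_min hex (by omega))
  have hRlow : s / β * rmin ≤ R m := by
    rw [hm', ← hRsucc m']
    have h1 : s / β ≤ R m' := (div_le_iff₀ hβpos).2 hRm'β
    exact mul_le_mul h1 (hrminle _) hrminpos.le (hRpos m').le
  have hcrs : c * s ≤ ρ₀ * R m := by
    have h1 : c ≤ ρ₀ * rmin / β := min_le_left _ _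
    calc c * s ≤ (ρ₀ * rmin / β) * s := mul_le_mul_of_nonneg_right h1 hs.1.le
    _ = ρ₀ * (s / β * rmin) := by ring
    _ ≤ ρ₀ * R m := mul_le_mul_of_nonneg_left hRlow hρ₀pos.le
  -- the point z
  have hxm1 : x ∈ comp7 φ (L (m + 1)) '' X := by
    have := hmemJ ω x hten (m + 1)
    rw [hLdef]
    exact this
  rw [hLsucc m, comp7_append] at hxm1
  obtain ⟨w, hwX, hwx⟩ := hxm1
  have hzx : comp7 φ (L m) (φ (ω m) w) = x := hwx
  set z := φ (ω m) w with hzdef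
  have hzK : z ∈ K := by
    rw [hKdef]
    exact Set.mem_iUnion.2 ⟨ω m, ⟨w, hwX, rfl⟩⟩
  obtain ⟨tz, htzT, hbz⟩ := huni z hzK
  have hcenter : comp7 φ (L m) (z + tz • v) = x + (R m * tz) • v := by
    rw [comp7_line hφ, hzx, hRdef]
  have hball1 : Metric.ball (x + (R m * tz) • v) (ρ₀ * R m) ⊆
      comp7 φ (L m) '' Metric.ball (z + tz • v) ρ₀ := by
    rw [← hcenter]
    have h := comp7_ball hφ hrpos (L m) (z + tz • v) ρ₀
    rw [hRdef]
    rw [mul_comm]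
    exact h
  have hsubO : comp7 φ (L m) '' Metric.ball (z + tz • v) ρ₀ ⊆ comp7 φ (L m) '' O :=
    Set.image_mono hbz
  have hballx : Metric.ball (x + (R m * tz) • v) (c * s) ⊆ Metric.ball x s := by
    intro w' hw'
    rw [Metric.mem_ball] at hw' ⊢
    have hd1 : dist (x + (R m * tz) • v) x = R m * |tz| := by
      rw [dist_eq_norm, add_sub_cancel_left, norm_smul, hv, mul_one, Real.norm_eq_abs,
        abs_mul, abs_of_pos (hRpos m)]
    have h5 : R m * |tz| ≤ R m * T := mul_le_mul_of_nonneg_left htzT (hRpos m).le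
    have h6 : R m * β = R m * T + R m * ρ₀ + R m := by rw [hβdef]; ring
    have h7 := dist_triangle w' (x + (R m * tz) • v) x
    have h8 := hRpos m
    linarith
  have hdisjJ : ∀ p ∈ Metric.ball (x + (R m * tz) • v) (c * s), p ∉ J := by
    intro p hp hpJ
    have hpO : p ∈ comp7 φ (L m) '' O :=
      hsubO (hball1 (Metric.ball_subset_ball hcrs hp))
    obtain ⟨u, huO, hup⟩ := hpO
    have hpJ' := hpJ
    rw [hJ] at hpJ'
    obtain ⟨σ, hσ⟩ := hpJ'
    by_cases hls : (List.ofFn fun i : Fin m => σ i) = L m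
    · have hpm : p ∈ comp7 φ (List.ofFn fun i : Fin (m + 1) => σ i) '' X := hmemJ σ p hσ (m + 1)
      have hMsucc : (List.ofFn fun i : Fin (m + 1) => σ i) =
          (List.ofFn fun i : Fin m => σ i) ++ [σ m] := ofFn_snoc7 σ m
      rw [hMsucc, hls, comp7_append] at hpm
      obtain ⟨w', hw'X, hw'p⟩ := hpm
      have heq : comp7 φ (L m) u = comp7 φ (L m) (comp7 φ [σ m] w') := hup.trans hw'p.symm
      have hu : u = φ (σ m) w' := comp7_inj hφ hrpos (L m) heq
      refine huO.2 ?_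
      rw [hu, hKdef]
      exact Set.mem_iUnion.2 ⟨σ m, ⟨w', hw'X, rfl⟩⟩
    · have hpm : p ∈ comp7 φ (List.ofFn fun i : Fin m => σ i) '' X := hmemJ σ p hσ m
      have hd := comp7_osc hφ hrpos hmaps hOSC (List.ofFn fun i : Fin m => σ i) (L m)
        (by simp [hLdef]) hls
      have hpcl : p ∈ closure (comp7 φ (List.ofFn fun i : Fin m => σ i) '' interior X) := by
        have h1 : comp7 φ (List.ofFn fun i : Fin m => σ i) '' X ⊆
            closure (comp7 φ (List.ofFn fun i : Fin m => σ i) '' interior X) := by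
          nth_rewrite 1 [hXreg]
          exact image_closure_subset_closure_image (comp7_cont hφ _)
        exact h1 hpm
      have hBsub : Metric.ball (x + (R m * tz) • v) (c * s) ⊆ comp7 φ (L m) '' interior X := by
        intro q hq
        have := hsubO (hball1 (Metric.ball_subset_ball hcrs hq))
        exact Set.image_mono (fun u' hu' => hu'.1) this
      have hclosed : closure (comp7 φ (List.ofFn fun i : Fin m => σ i) '' interior X) ⊆
          (Metric.ball (x + (R m * tz) • v) (c * s))ᶜ :=
        closure_minimal (fun q hq hqB => Set.disjoint_left.1 hd hq (hBsub hqB))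
          Metric.isOpen_ball.isClosed_compl
      exact hclosed hpcl hp
  have hbdd : BddAbove {c' : ℝ | 0 ≤ c' ∧ ∃ t' : ℝ,
      Metric.ball (x + t' • v) (c' * s) ⊆ Metric.ball x s \ J} := by
    refine ⟨4, fun c' hc' => ?_⟩
    obtain ⟨hc'0, t', hsub⟩ := hc'
    rcases eq_or_lt_of_le hc'0 with h | h
    · linarith
    · have hcs : 0 < c' * s := mul_pos h hs.1
      have h1 : x + t' • v ∈ Metric.ball x s := (hsub (Metric.mem_ball_self hcs)).1
      have h2 : x + t' • v + (c' * s / 2) • v ∈ Metric.ball x s := by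
        refine (hsub ?_).1
        rw [Metric.mem_ball, dist_eq_norm, add_sub_cancel_left, norm_smul, hv, mul_one,
          Real.norm_eq_abs, abs_of_pos (by linarith)]
        linarith
      rw [Metric.mem_ball] at h1 h2
      have h3 : dist (x + t' • v + (c' * s / 2) • v) (x + t' • v) = c' * s / 2 := by
        rw [dist_eq_norm, add_sub_cancel_left, norm_smul, hv, mul_one,
          Real.norm_eq_abs, abs_of_pos (by linarith)]
      have h4 := dist_triangle (x + t' • v + (c' * s / 2) • v) x (x + t' • v)
      rw [h3] at h4
      have h5 : dist x (x + t' • v) = dist (x + t' • v) x := dist_comm _ _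
      rw [h5] at h4
      nlinarith [hs.1]
  have hmem : c ∈ {c' : ℝ | 0 ≤ c' ∧ ∃ t' : ℝ,
      Metric.ball (x + t' • v) (c' * s) ⊆ Metric.ball x s \ J} :=
    ⟨hcpos.le, R m * tz, fun w' hw' => ⟨hballx hw', hdisjJ w' hw'⟩⟩
  unfold porDir
  exact le_csSup hbdd hmem
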